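/- Let A be an associative unital ℚ-algebra, let p, q ∈ A and let N ≥ 1 be an integer with (qp)^N = 0. Set p̃ = Σ_{k=0}^{N−1} c_k · p(qp)^k and q̃ = Σ_{l=0}^{N−1} c_l · (qp)^l q. Then p̃ q̃ = Σ_{k=1}^{2N} ((−1)^{k+1}/k) · (pq)^k and q̃ p̃ = Σ_{k=1}^{2N} ((−1)^{k+1}/k) · (qp)^k; that is, p̃ q̃ = log(1 + pq) and q̃ p̃ = log(1 + qp), where the logarithm of a unipotent element 1 + x with x nilpotent is the finite sum Σ_{k ≥ 1} ((−1)^{k+1}/k) x^k. -/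

import Mathlib

/-- The sequence `c_0 = 1`, `c_k = ½((−1)^k/(k+1) − Σ_{l+m=k, 0<l,m<k} c_l c_m)`. -/
def braidC : ℕ → ℚ
  | 0 => 1
  | (k + 1) =>
      (1 / 2) * ((-1) ^ (k + 1) / (k + 2) -
        ∑ l ∈ (Finset.Icc 1 k).attach, braidC l.1 * braidC (k + 1 - l.1))
  termination_by k => k
  decreasing_by
  · have := l.2; simp only [Finset.mem_Icc] at this; omega
  · have := l.2; simp only [Finset.mem_Icc] at this; omega

lemma braidC_conv (m : ℕ) :
    ∑ ij ∈ Finset.HasAntidiagonal.antidiagonal m, braidC ij.1 * braidC ij.2 = (-1) ^ m / (m + 1) := by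
  rw [Finset.Nat.sum_antidiagonal_eq_sum_range_succ_mk]
  cases m with
  | zero => simp [braidC]
  | succ k =>
    rw [Finset.sum_range_succ, Finset.sum_range_succ']
    have hmid : ∑ l ∈ Finset.range k, braidC (l + 1) * braidC (k + 1 - (l + 1)) =
        ∑ l ∈ (Finset.Icc 1 k).attach, braidC l.1 * braidC (k + 1 - l.1) := by
      rw [Finset.sum_attach (Finset.Icc 1 k) (fun l => braidC l * braidC (k + 1 - l))]
      rw [← Finset.Ico_add_one_right_eq_Icc, Finset.sum_Ico_eq_sum_range]
      simp [add_comm]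
    have hdef : braidC (k + 1) = (1 / 2) * ((-1) ^ (k + 1) / (k + 2) -
        ∑ l ∈ (Finset.Icc 1 k).attach, braidC l.1 * braidC (k + 1 - l.1)) := by
      rw [braidC]
    rw [hmid, hdef]
    simp only [braidC, Nat.sub_zero, Nat.sub_self]
    push_cast
    ring

open Polynomial Finset in
/-- The polynomial `Σ_{k<N} c_k X^k`. -/
noncomputable def braidP (N : ℕ) : ℚ[X] := ∑ k ∈ range N, C (braidC k) * X ^ k

open Polynomial Finset in
lemma braidP_coeff (N i : ℕ) : (braidP N).coeff i = if i < N then braidC i else 0 := by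
  simp [braidP, coeff_C_mul, coeff_X_pow]

open Polynomial Finset in
lemma braid_key (A : Type*) [Ring A] [Algebra ℚ A] (y : A) (N : ℕ) (hN : 1 ≤ N)
    (hy : y ^ (N + 1) = 0) :
    ∑ k ∈ range N, ∑ l ∈ range N, (braidC k * braidC l) • y ^ (k + l + 1) =
      ∑ k ∈ Finset.Icc 1 (2 * N), ((-1) ^ (k + 1) / (k : ℚ)) • y ^ k := by
  have hyz : ∀ i, N + 1 ≤ i → y ^ i = 0 := by
    intro i hi
    rw [show i = (N + 1) + (i - (N + 1)) by omega, pow_add, hy, zero_mul]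
  have hPdeg : (braidP N).natDegree ≤ N - 1 := by
    apply Polynomial.natDegree_sum_le_of_forall_le
    intro k hk
    refine le_trans (Polynomial.natDegree_C_mul_le _ _) ?_
    rw [Polynomial.natDegree_X_pow]
    simp only [Finset.mem_range] at hk; omega
  have hdeg : (braidP N * braidP N * X).natDegree < 2 * N + 1 := by
    calc (braidP N * braidP N * X).natDegree
        ≤ (braidP N * braidP N).natDegree + X.natDegree := natDegree_mul_le
      _ ≤ ((braidP N).natDegree + (braidP N).natDegree) + X.natDegree :=
          Nat.add_le_add_right natDegree_mul_le _
      _ < 2 * N + 1 := by rw [natDegree_X]; omega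
  have haev : (aeval y) (braidP N * braidP N * X) =
      ∑ k ∈ range N, ∑ l ∈ range N, (braidC k * braidC l) • y ^ (k + l + 1) := by
    have hP : (aeval y) (braidP N) = ∑ k ∈ range N, braidC k • y ^ k := by
      simp [braidP, Algebra.smul_def]
    rw [map_mul, map_mul, hP, aeval_X, Finset.sum_mul_sum, Finset.sum_mul]
    refine Finset.sum_congr rfl fun k _ => ?_
    rw [Finset.sum_mul]
    refine Finset.sum_congr rfl fun l _ => ?_
    simp only [mul_smul_comm, smul_mul_assoc, smul_smul, ← pow_add, ← pow_succ]
    rw [mul_comm (braidC l)]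
  have h1 : ∑ k ∈ Finset.Icc 1 (2 * N), ((-1) ^ (k + 1) / (k : ℚ)) • y ^ k
      = ∑ k ∈ Finset.Icc 1 N, ((-1) ^ (k + 1) / (k : ℚ)) • y ^ k := by
    refine (Finset.sum_subset (Finset.Icc_subset_Icc_right (by omega)) fun i hi hni => ?_).symm
    simp only [Finset.mem_Icc] at hi hni
    rw [hyz i (by omega), smul_zero]
  have h2 : (∑ i ∈ range (2 * N + 1), (braidP N * braidP N * X).coeff i • y ^ i)
      = ∑ i ∈ Finset.Icc 1 N, (braidP N * braidP N * X).coeff i • y ^ i := by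
    refine (Finset.sum_subset (fun i hi => ?_) fun i hi hni => ?_).symm
    · simp only [Finset.mem_Icc] at hi; simp only [Finset.mem_range]; omega
    · simp only [Finset.mem_Icc, not_and, not_le] at hni
      rcases Nat.eq_zero_or_pos i with h0 | h1
      · subst h0; simp
      · rw [hyz i (by omega), smul_zero]
  rw [← haev, aeval_eq_sum_range' hdeg, h1, h2]
  refine Finset.sum_congr rfl fun i hi => ?_
  simp only [Finset.mem_Icc] at hi
  congr 1
  obtain ⟨j, rfl⟩ : ∃ j, i = j + 1 := ⟨i - 1, by omega⟩
  rw [coeff_mul_X, coeff_mul]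
  have hterm : ∀ ij ∈ Finset.HasAntidiagonal.antidiagonal j, (braidP N).coeff ij.1 * (braidP N).coeff ij.2
      = braidC ij.1 * braidC ij.2 := by
    intro ij hij
    rw [Finset.HasAntidiagonal.mem_antidiagonal] at hij
    rw [braidP_coeff, braidP_coeff, if_pos (by omega), if_pos (by omega)]
  rw [Finset.sum_congr rfl hterm, braidC_conv]
  rw [show ((-1 : ℚ)) ^ (j + 1 + 1) = (-1) ^ j by ring]
  push_cast
  ring

/-- with `p̃ = Σ_{k<N} c_k p(qp)^k` and `q̃ = Σ_{l<N} c_l (qp)^l q`, one has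
`p̃ q̃ = log(1 + pq)` and `q̃ p̃ = log(1 + qp)` (finite sums since `(qp)^N = 0`). -/
theorem stmt11 (A : Type*) [Ring A] [Algebra ℚ A] (p q : A) (N : ℕ) (hN : 1 ≤ N)
    (h : (q * p) ^ N = 0) :
    (∑ k ∈ Finset.range N, braidC k • (p * (q * p) ^ k)) *
        (∑ l ∈ Finset.range N, braidC l • ((q * p) ^ l * q)) =
      ∑ k ∈ Finset.Icc 1 (2 * N), ((-1) ^ (k + 1) / (k : ℚ)) • (p * q) ^ k ∧
    (∑ l ∈ Finset.range N, braidC l • ((q * p) ^ l * q)) *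
        (∑ k ∈ Finset.range N, braidC k • (p * (q * p) ^ k)) =
      ∑ k ∈ Finset.Icc 1 (2 * N), ((-1) ^ (k + 1) / (k : ℚ)) • (q * p) ^ k := by
  have hsc : ∀ m : ℕ, p * (q * p) ^ m = (p * q) ^ m * p := fun m =>
    ((SemiconjBy.pow_right (show SemiconjBy p (q * p) (p * q) from (mul_assoc p q p).symm) m))
  have hpq : ∀ m : ℕ, p * (q * p) ^ m * q = (p * q) ^ (m + 1) := by
    intro m
    rw [hsc, pow_succ, mul_assoc]
  constructor
  · rw [Finset.sum_mul_sum]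
    rw [← braid_key A (p * q) N hN (by rw [← hpq, h, mul_zero, zero_mul])]
    refine Finset.sum_congr rfl fun k _ => Finset.sum_congr rfl fun l _ => ?_
    rw [smul_mul_assoc, mul_smul_comm, smul_smul, ← hpq (k + l), pow_add, mul_assoc,
      mul_assoc, mul_assoc]
  · rw [Finset.sum_mul_sum]
    rw [← braid_key A (q * p) N hN (by rw [pow_succ, h, zero_mul])]
    refine Finset.sum_congr rfl fun l _ => Finset.sum_congr rfl fun k _ => ?_
    rw [smul_mul_assoc, mul_smul_comm, smul_smul]
    congr 1
    rw [mul_assoc, ← mul_assoc q p, ← pow_succ', ← pow_add, ← add_assoc]
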